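/- Let (X, d) be a metric space, Y a finite set, F a real normed vector space, and T : X → F a map satisfying the δ-isometry property |‖T x − T x'‖ − d(x, x')| ≤ δ for all x, x' ∈ X, for some δ ≥ 0. Let h : F × Y → ℝ satisfy |h(u, y) − h(v, y)| ≤ A·‖u − v‖ for all u, v ∈ F and all y ∈ Y, where A ≥ 0. Suppose X is covered by N sets each of diameter at most γ. Then X × Y can be partitioned into at most |Y|·N sets such that whenever (x, y) and (x', y') belong to the same set of the partition, |h(T x, y) − h(T x', y')| ≤ A·(γ + δ). -/
import Mathlib


/-- paper's Theorem 2.2: a `δ`-isometric representation `T` composed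
with a loss `h` that is `A`-Lipschitz in its first argument, together with a cover of `X`
by `N` sets of diameter at most `γ`, yields a partition of `X × Y` into at most
`|Y|·N` sets on whose cells the loss varies by at most `A·(γ + δ)`. -/
theorem stmt1 {X : Type*} [MetricSpace X] {Y : Type*} [Fintype Y]
    {F : Type*} [NormedAddCommGroup F] [NormedSpace ℝ F]
    (T : X → F) (δ : ℝ) (hδ : 0 ≤ δ)
    (hiso : ∀ x x' : X, |‖T x - T x'‖ - dist x x'| ≤ δ)
    (h : F → Y → ℝ) (A : ℝ) (hA : 0 ≤ A)
    (hlip : ∀ u v : F, ∀ y : Y, |h u y - h v y| ≤ A * ‖u - v‖)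
    (N : ℕ) (γ : ℝ) (U : Fin N → Set X)
    (hUcover : (⋃ i, U i) = Set.univ)
    (hUdiam : ∀ i, ∀ x ∈ U i, ∀ x' ∈ U i, dist x x' ≤ γ) :
    ∃ (K : ℕ) (D : Fin K → Set (X × Y)),
      K ≤ Fintype.card Y * N ∧
      Pairwise (Function.onFun Disjoint D) ∧
      (⋃ k, D k) = Set.univ ∧
      ∀ k : Fin K, ∀ p ∈ D k, ∀ q ∈ D k,
        |h (T p.1) p.2 - h (T q.1) q.2| ≤ A * (γ + δ) := by
  have hex : ∀ x : X, ∃ i, x ∈ U i := by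
    intro x
    have : x ∈ ⋃ i, U i := hUcover ▸ Set.mem_univ x
    exact Set.mem_iUnion.mp this
  classical
  set g : X → Fin N := fun x => (hex x).choose with hg
  have hgmem : ∀ x, x ∈ U (g x) := fun x => (hex x).choose_spec
  set f : X × Y → Fin N × Y := fun p => (g p.1, p.2) with hf
  set K := Fintype.card (Fin N × Y) with hK
  set e : Fin K ≃ (Fin N × Y) := (Fintype.equivFin (Fin N × Y)).symm with he
  refine ⟨K, fun k => f ⁻¹' {e k}, ?_, ?_, ?_, ?_⟩
  · simp [hK, Fintype.card_prod, Nat.mul_comm]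
  · intro k k' hkk'
    refine Set.disjoint_left.mpr ?_
    intro p hp hp'
    exact hkk' (e.injective (hp.symm.trans hp'))
  · ext p
    simp only [Set.mem_iUnion, Set.mem_preimage, Set.mem_singleton_iff, Set.mem_univ, iff_true]
    exact ⟨e.symm (f p), by simp⟩
  · intro k p hp q hq
    simp only [Set.mem_preimage, Set.mem_singleton_iff] at hp hq
    have hfeq : f p = f q := hp.trans hq.symm
    simp only [hf, Prod.mk.injEq] at hfeq
    obtain ⟨hgeq, hy⟩ := hfeq
    have hd : dist p.1 q.1 ≤ γ :=
      hUdiam (g p.1) p.1 (hgmem p.1) q.1 (hgeq ▸ hgmem q.1)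
    have hn : ‖T p.1 - T q.1‖ ≤ γ + δ := by
      have := hiso p.1 q.1
      have := abs_le.mp this
      linarith [this.2]
    calc |h (T p.1) p.2 - h (T q.1) q.2|
        = |h (T p.1) p.2 - h (T q.1) p.2| := by rw [hy]
      _ ≤ A * ‖T p.1 - T q.1‖ := hlip _ _ _
      _ ≤ A * (γ + δ) := by
          exact mul_le_mul_of_nonneg_left hn hA
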